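/- Let p be an odd prime, R = F_p[u]/(u^2), and θ an automorphism of R. The polynomial x^n − 1 factors in F_p[x] as x^n − 1 = f₁(x)·g₁(x) if and only if there exist f₂(x), g₂(x) ∈ F_p[x] such that x^n − 1 = (f₁(x) + u f₂(x)) ∗ (g₁(x) + u g₂(x)) in R[x;θ]. -/

import Mathlib

open TrivSqZeroExt

theorem RingAut.one_apply' {R : Type*} [Ring R] (b : R) : (1 : RingAut R) b = b := rfl

/-- The skew polynomial ring `R[x;θ]`, as finitely supported coefficient
sequences with multiplication twisted by the ring automorphism `θ`:
`(a x^i) * (b x^j) = a θ^i(b) x^{i+j}`. -/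
def SkewPoly (R : Type*) [Ring R] (θ : RingAut R) : Type _ := ℕ →₀ R

namespace SkewPoly

variable {R : Type*} [Ring R] (θ : RingAut R)

/-- The skew-twisted convolution product. -/
noncomputable def mulAux (f g : ℕ →₀ R) : ℕ →₀ R :=
  f.sum fun i a => g.sum fun j b => Finsupp.single (i + j) (a * (θ ^ i) b)

theorem mulAux_zero_left (g : ℕ →₀ R) : mulAux θ 0 g = 0 := Finsupp.sum_zero_index

theorem mulAux_zero_right (f : ℕ →₀ R) : mulAux θ f 0 = 0 := by
  simp [mulAux, Finsupp.sum_zero_index]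

theorem mulAux_add_left (f f' g : ℕ →₀ R) :
    mulAux θ (f + f') g = mulAux θ f g + mulAux θ f' g := by
  unfold mulAux
  apply Finsupp.sum_add_index' <;> intros <;> simp [add_mul, Finsupp.single_add, Finsupp.sum_add]

theorem mulAux_add_right (f g g' : ℕ →₀ R) :
    mulAux θ f (g + g') = mulAux θ f g + mulAux θ f g' := by
  unfold mulAux
  rw [← Finsupp.sum_add]
  apply Finsupp.sum_congr
  intro i _
  apply Finsupp.sum_add_index' <;> intros <;> simp [mul_add, Finsupp.single_add]

theorem one_mulAux (g : ℕ →₀ R) : mulAux θ (Finsupp.single 0 1) g = g := by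
  unfold mulAux
  rw [Finsupp.sum_single_index]
  · simp [RingAut.one_apply', Finsupp.sum_single]
  · simp

theorem mulAux_one (f : ℕ →₀ R) : mulAux θ f (Finsupp.single 0 1) = f := by
  unfold mulAux
  have : ∀ i ∈ f.support, ((Finsupp.single 0 1 : ℕ →₀ R).sum fun j b =>
      Finsupp.single (i + j) (f i * (θ ^ i) b)) = Finsupp.single i (f i) := by
    intro i _
    rw [Finsupp.sum_single_index] <;> simp
  rw [Finsupp.sum_congr this, Finsupp.sum_single f]

theorem mulAux_single_single (i j : ℕ) (a b : R) :
    mulAux θ (Finsupp.single i a) (Finsupp.single j b) =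
      Finsupp.single (i + j) (a * (θ ^ i) b) := by
  unfold mulAux
  rw [Finsupp.sum_single_index, Finsupp.sum_single_index]
  · simp
  · rw [Finsupp.sum_single_index] <;> simp

theorem mulAux_assoc (f g h : ℕ →₀ R) :
    mulAux θ (mulAux θ f g) h = mulAux θ f (mulAux θ g h) := by
  induction f using Finsupp.induction_linear with
  | zero => simp [mulAux_zero_left]
  | add f f' hf hf' => simp [mulAux_add_left, hf, hf']
  | single i a =>
    induction g using Finsupp.induction_linear with
    | zero => simp [mulAux_zero_left, mulAux_zero_right]
    | add g g' hg hg' => simp [mulAux_add_left, mulAux_add_right, hg, hg']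
    | single j b =>
      induction h using Finsupp.induction_linear with
      | zero => simp [mulAux_zero_right]
      | add h h' hh hh' => simp [mulAux_add_right, hh, hh']
      | single k c =>
        rw [mulAux_single_single, mulAux_single_single, mulAux_single_single,
          mulAux_single_single]
        rw [add_assoc, mul_assoc, map_mul, pow_add]
        rfl

variable {θ}

noncomputable instance : AddCommGroup (SkewPoly R θ) := inferInstanceAs (AddCommGroup (ℕ →₀ R))

/-- Reinterpret a skew polynomial as a finitely supported function. -/
def toFinsupp (f : SkewPoly R θ) : ℕ →₀ R := f

/-- Build a skew polynomial out of a finitely supported function. -/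
def ofFinsupp (f : ℕ →₀ R) : SkewPoly R θ := f

noncomputable instance : Ring (SkewPoly R θ) where
  __ := (inferInstance : AddCommGroup (ℕ →₀ R))
  mul f g := mulAux θ (toFinsupp f) (toFinsupp g)
  one := Finsupp.single 0 1
  left_distrib f g h := mulAux_add_right θ (toFinsupp f) (toFinsupp g) (toFinsupp h)
  right_distrib f g h := mulAux_add_left θ (toFinsupp f) (toFinsupp g) (toFinsupp h)
  zero_mul := mulAux_zero_left θ
  mul_zero := mulAux_zero_right θ
  mul_assoc := mulAux_assoc θ
  one_mul := one_mulAux θ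
  mul_one := mulAux_one θ

variable (θ) in
/-- The constant skew polynomial `a`. -/
noncomputable def C (a : R) : SkewPoly R θ := ofFinsupp (Finsupp.single 0 a)

variable (θ) in
/-- The variable `x` of the skew polynomial ring. -/
noncomputable def X : SkewPoly R θ := ofFinsupp (Finsupp.single 1 1)

/-- The `n`-th coefficient of a skew polynomial. -/
def coeff (f : SkewPoly R θ) (n : ℕ) : R := toFinsupp f n

/-- The degree of a skew polynomial (`⊥` for the zero polynomial). -/
def degree (f : SkewPoly R θ) : WithBot ℕ := (toFinsupp f).support.max

/-- The degree of a skew polynomial as a natural number. -/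
def natDegree (f : SkewPoly R θ) : ℕ := WithBot.unbotD 0 (degree f)

/-- The leading coefficient of a skew polynomial. -/
def leadingCoeff (f : SkewPoly R θ) : R := coeff f (natDegree f)

/-- A skew polynomial is monic if its leading coefficient is `1`. -/
def Monic (f : SkewPoly R θ) : Prop := leadingCoeff f = 1

end SkewPoly

/-- The inclusion of `F_p[x]` into the skew polynomial ring
`(F_p + u F_p)[x;θ]` (coefficientwise `a ↦ a + u·0`); this is the natural
embedding of `F_p[x]` as a subring of `R[x;θ]` since `θ` fixes `F_p`. -/
noncomputable def SkewPoly.ofPoly {p : ℕ}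
    (θ : RingAut (DualNumber (ZMod p))) (f : Polynomial (ZMod p)) :
    SkewPoly (DualNumber (ZMod p)) θ :=
  SkewPoly.ofFinsupp
    (Finsupp.mapRange (inl : ZMod p → DualNumber (ZMod p)) (inl_zero (ZMod p)) f.toFinsupp.coeff)

/-- Reduction of a skew polynomial over `F_p + u F_p` modulo `u`, i.e. the
polynomial in `F_p[x]` whose coefficients are the first components of the
coefficients. -/
noncomputable def SkewPoly.fstPoly {p : ℕ}
    {θ : RingAut (DualNumber (ZMod p))} (f : SkewPoly (DualNumber (ZMod p)) θ) :
    Polynomial (ZMod p) :=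
  Polynomial.ofFinsupp (AddMonoidAlgebra.ofCoeff (Finsupp.mapRange TrivSqZeroExt.fst fst_zero (SkewPoly.toFinsupp f)))

section Aux

open TrivSqZeroExt SkewPoly

variable {p : ℕ}

theorem theta_inl (hp : 0 < p) (θ : RingAut (DualNumber (ZMod p))) (a : ZMod p) :
    θ (inl a) = inl a := by
  haveI : NeZero p := ⟨hp.ne'⟩
  have h : (inl a : DualNumber (ZMod p)) = ((a.val : ℕ) : DualNumber (ZMod p)) := by
    rw [← inl_natCast]
    exact congrArg inl (ZMod.natCast_rightInverse a).symm
  rw [h, map_natCast, ← h]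

theorem theta_pow_inl (hp : 0 < p) (θ : RingAut (DualNumber (ZMod p))) (i : ℕ) (a : ZMod p) :
    (θ ^ i) (inl a) = inl a := by
  induction i with
  | zero => rfl
  | succ i ih =>
    have h : (θ ^ (i + 1)) (inl a) = (θ ^ i) (θ (inl a)) := by rw [pow_succ]; rfl
    rw [h, theta_inl hp θ a, ih]

theorem fst_theta (hp : p.Prime) (θ : RingAut (DualNumber (ZMod p)))
    (x : DualNumber (ZMod p)) : (θ x).fst = x.fst := by
  haveI := Fact.mk hp
  rw [← inl_fst_add_inr_snd_eq x, map_add, theta_inl hp.pos θ, fst_add, fst_add,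
    fst_inl, fst_inr, add_zero]
  have h2 : θ (inr x.snd) * θ (inr x.snd) = 0 := by rw [← map_mul, inr_mul_inr, map_zero]
  have h3 : (θ (inr x.snd)).fst * (θ (inr x.snd)).fst = 0 := by rw [← fst_mul, h2, fst_zero]
  rw [mul_self_eq_zero.mp h3, add_zero]

theorem fst_theta_pow (hp : p.Prime) (θ : RingAut (DualNumber (ZMod p))) (i : ℕ)
    (x : DualNumber (ZMod p)) : ((θ ^ i) x).fst = x.fst := by
  induction i generalizing x with
  | zero => rfl
  | succ i ih =>
    have h : (θ ^ (i + 1)) x = (θ ^ i) (θ x) := by rw [pow_succ]; rfl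
    rw [h, ih (θ x), fst_theta hp]

variable {θ : RingAut (DualNumber (ZMod p))}

theorem SkewPoly.mul_def (f g : SkewPoly (DualNumber (ZMod p)) θ) :
    f * g = SkewPoly.ofFinsupp (SkewPoly.mulAux θ (toFinsupp f) (toFinsupp g)) := rfl

theorem SkewPoly.one_def : (1 : SkewPoly (DualNumber (ZMod p)) θ) =
    SkewPoly.ofFinsupp (Finsupp.single 0 1) := rfl

theorem ofPoly_add (f g : Polynomial (ZMod p)) :
    SkewPoly.ofPoly θ (f + g) = SkewPoly.ofPoly θ f + SkewPoly.ofPoly θ g := by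
  unfold SkewPoly.ofPoly
  rw [Polynomial.toFinsupp_add, AddMonoidAlgebra.coeff_add, Finsupp.mapRange_add (inl_add _)]
  rfl

theorem ofPoly_monomial (k : ℕ) (a : ZMod p) :
    SkewPoly.ofPoly θ (Polynomial.monomial k a) =
      SkewPoly.ofFinsupp (Finsupp.single k (inl a)) := by
  unfold SkewPoly.ofPoly
  rw [Polynomial.toFinsupp_monomial, AddMonoidAlgebra.coeff_single, Finsupp.mapRange_single]

theorem ofPoly_mul (hp : 0 < p) (f g : Polynomial (ZMod p)) :
    SkewPoly.ofPoly θ (f * g) = SkewPoly.ofPoly θ f * SkewPoly.ofPoly θ g := by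
  induction f using Polynomial.induction_on' with
  | add u v hu hv => rw [add_mul, ofPoly_add, hu, hv, ofPoly_add, add_mul]
  | monomial i a =>
    induction g using Polynomial.induction_on' with
    | add u v hu hv => rw [mul_add, ofPoly_add, hu, hv, ofPoly_add, mul_add]
    | monomial j b =>
      rw [Polynomial.monomial_mul_monomial, ofPoly_monomial, ofPoly_monomial,
        ofPoly_monomial, SkewPoly.mul_def]
      show SkewPoly.ofFinsupp (Finsupp.single (i + j) (inl (a * b))) =
        SkewPoly.ofFinsupp (SkewPoly.mulAux θ (Finsupp.single i (inl a))
          (Finsupp.single j (inl b)))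
      rw [SkewPoly.mulAux_single_single, theta_pow_inl hp θ i b, inl_mul]

theorem ofPoly_one : SkewPoly.ofPoly θ (1 : Polynomial (ZMod p)) = 1 := by
  have : (1 : Polynomial (ZMod p)) = Polynomial.monomial 0 1 := by
    rw [Polynomial.monomial_zero_one]
  rw [this, ofPoly_monomial, inl_one, SkewPoly.one_def]

theorem ofPoly_X : SkewPoly.ofPoly θ (Polynomial.X : Polynomial (ZMod p)) = SkewPoly.X θ := by
  have : (Polynomial.X : Polynomial (ZMod p)) = Polynomial.monomial 1 1 := by
    rw [Polynomial.monomial_one_one_eq_X]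
  rw [this, ofPoly_monomial, inl_one]
  rfl

theorem ofPoly_pow (hp : 0 < p) (f : Polynomial (ZMod p)) (n : ℕ) :
    SkewPoly.ofPoly θ (f ^ n) = SkewPoly.ofPoly θ f ^ n := by
  induction n with
  | zero => simpa using ofPoly_one
  | succ n ih => rw [pow_succ, pow_succ, ofPoly_mul hp, ih]

theorem ofPoly_sub (f g : Polynomial (ZMod p)) :
    SkewPoly.ofPoly θ (f - g) = SkewPoly.ofPoly θ f - SkewPoly.ofPoly θ g := by
  unfold SkewPoly.ofPoly
  rw [Polynomial.toFinsupp_sub, show ∀ a b : AddMonoidAlgebra (ZMod p) ℕ, (a - b).coeff = a.coeff - b.coeff from fun _ _ => rfl, Finsupp.mapRange_sub (inl_sub _)]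
  rfl

theorem key_eq (hp : 0 < p) (n : ℕ) :
    SkewPoly.X θ ^ n - 1 = SkewPoly.ofPoly θ (Polynomial.X ^ n - 1) := by
  rw [ofPoly_sub, ofPoly_pow hp, ofPoly_X, ofPoly_one]

/-- auxiliary reduction map on raw finsupps -/
noncomputable def Phi (F : ℕ →₀ DualNumber (ZMod p)) : Polynomial (ZMod p) :=
  Polynomial.ofFinsupp (AddMonoidAlgebra.ofCoeff (Finsupp.mapRange TrivSqZeroExt.fst fst_zero F))

theorem fstPoly_eq_Phi (f : SkewPoly (DualNumber (ZMod p)) θ) :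
    SkewPoly.fstPoly f = Phi (SkewPoly.toFinsupp f) := rfl

theorem Phi_add (F G : ℕ →₀ DualNumber (ZMod p)) : Phi (F + G) = Phi F + Phi G := by
  unfold Phi
  rw [Finsupp.mapRange_add fst_add, AddMonoidAlgebra.ofCoeff_add, Polynomial.ofFinsupp_add]

theorem Phi_zero : Phi (0 : ℕ →₀ DualNumber (ZMod p)) = 0 := by
  unfold Phi
  rw [Finsupp.mapRange_zero]
  rfl

theorem Phi_single (k : ℕ) (c : DualNumber (ZMod p)) :
    Phi (Finsupp.single k c) = Polynomial.monomial k c.fst := by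
  unfold Phi
  rw [Finsupp.mapRange_single, AddMonoidAlgebra.ofCoeff_single, Polynomial.ofFinsupp_single]

theorem Phi_mulAux (hp : p.Prime) (F G : ℕ →₀ DualNumber (ZMod p)) :
    Phi (SkewPoly.mulAux θ F G) = Phi F * Phi G := by
  induction F using Finsupp.induction_linear with
  | zero => rw [SkewPoly.mulAux_zero_left, Phi_zero, zero_mul]
  | add u v hu hv => rw [SkewPoly.mulAux_add_left, Phi_add, hu, hv, Phi_add, add_mul]
  | single i a =>
    induction G using Finsupp.induction_linear with
    | zero => rw [SkewPoly.mulAux_zero_right, Phi_zero, mul_zero]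
    | add u v hu hv => rw [SkewPoly.mulAux_add_right, Phi_add, hu, hv, Phi_add, mul_add]
    | single j b =>
      rw [SkewPoly.mulAux_single_single, Phi_single, Phi_single, Phi_single,
        Polynomial.monomial_mul_monomial, fst_mul, fst_theta_pow hp]

theorem fstPoly_mul (hp : p.Prime) (f g : SkewPoly (DualNumber (ZMod p)) θ) :
    SkewPoly.fstPoly (f * g) = SkewPoly.fstPoly f * SkewPoly.fstPoly g := by
  rw [fstPoly_eq_Phi, fstPoly_eq_Phi, fstPoly_eq_Phi, SkewPoly.mul_def]
  exact Phi_mulAux hp _ _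

theorem fstPoly_add (f g : SkewPoly (DualNumber (ZMod p)) θ) :
    SkewPoly.fstPoly (f + g) = SkewPoly.fstPoly f + SkewPoly.fstPoly g :=
  Phi_add _ _

theorem fstPoly_ofPoly (f : Polynomial (ZMod p)) :
    SkewPoly.fstPoly (SkewPoly.ofPoly θ f) = f := by
  rw [fstPoly_eq_Phi]
  show Phi (Finsupp.mapRange inl (inl_zero (ZMod p)) f.toFinsupp.coeff) = f
  unfold Phi
  have h : Finsupp.mapRange TrivSqZeroExt.fst fst_zero
      (Finsupp.mapRange inl (inl_zero (ZMod p)) f.toFinsupp.coeff) = f.toFinsupp.coeff := by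
    ext k
    simp [Finsupp.mapRange_apply]
  rw [h, AddMonoidAlgebra.ofCoeff_coeff, Polynomial.eta]

theorem fstPoly_C_eps : SkewPoly.fstPoly (SkewPoly.C θ DualNumber.eps) = 0 := by
  rw [fstPoly_eq_Phi]
  show Phi (Finsupp.single 0 DualNumber.eps) = 0
  rw [Phi_single, DualNumber.fst_eps, Polynomial.monomial_zero_right]

end Aux

open SkewPoly DualNumber in
/-- `x^n - 1` factors in `F_p[x]` as `f₁·g₁` iff `x^n - 1` factors in
`R[x;θ]` as `(f₁ + u f₂) ∗ (g₁ + u g₂)` for some `f₂, g₂ ∈ F_p[x]`. -/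
theorem skew_factorization (p : ℕ) (hp : p.Prime) (hodd : p ≠ 2)
    (θ : RingAut (DualNumber (ZMod p))) (n : ℕ) (hn : 0 < n)
    (f₁ g₁ : Polynomial (ZMod p)) :
    (Polynomial.X ^ n - 1 = f₁ * g₁) ↔
      ∃ f₂ g₂ : Polynomial (ZMod p),
        SkewPoly.X θ ^ n - 1 =
          (SkewPoly.ofPoly θ f₁ + SkewPoly.C θ ε * SkewPoly.ofPoly θ f₂) *
          (SkewPoly.ofPoly θ g₁ + SkewPoly.C θ ε * SkewPoly.ofPoly θ g₂) := by
  haveI := Fact.mk hp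
  constructor
  · intro h
    refine ⟨0, 0, ?_⟩
    have h0 : SkewPoly.ofPoly θ (0 : Polynomial (ZMod p)) =
        (0 : SkewPoly (DualNumber (ZMod p)) θ) := by
      unfold SkewPoly.ofPoly
      rw [Polynomial.toFinsupp_zero, AddMonoidAlgebra.coeff_zero, Finsupp.mapRange_zero]
      rfl
    rw [h0, mul_zero, add_zero, add_zero, key_eq hp.pos, h, ofPoly_mul hp.pos]
  · rintro ⟨f₂, g₂, h⟩
    have := congrArg SkewPoly.fstPoly h
    rw [key_eq hp.pos (θ := θ) n, fstPoly_ofPoly, fstPoly_mul hp, fstPoly_add, fstPoly_add,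
      fstPoly_mul hp, fstPoly_mul hp, fstPoly_C_eps, zero_mul, add_zero, zero_mul, add_zero,
      fstPoly_ofPoly, fstPoly_ofPoly] at this
    exact this
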